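/- Let V satisfy the basic assumptions and let n ≥ 2. Then the energy E_n attains a unique minimiser x̄ on 𝒟_n; this minimiser lies in 𝒟_n ∖ ∂𝒟_n, i.e. 0 = x̄(0) < x̄(1) < ⋯ < x̄(n−1) < x̄(n) = 1, and it satisfies the force balance equations Σ_{k=0, k≠i}^{n} V'(n[x̄(k) − x̄(i)]) = 0 for every i = 1, …, n−1. -/

import Mathlib

open Filter Set MeasureTheory
open scoped Classical ENNReal NNReal BigOperators

noncomputable section

/-- `lam V x` is λ(x) := inf_{(0,x)} V''. -/
def lam (V : ℝ → ℝ) (x : ℝ) : ℝ :=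
  sInf (deriv (deriv V) '' Set.Ioo 0 x)

/-- The basic assumptions (Reg), (Sing), (Cvx), (Dec) on the interaction
potential `V`, with decay exponent `a`. -/
structure BasicAssumptions (V : ℝ → ℝ) (a : ℝ) : Prop where
  nonneg : ∀ x : ℝ, 0 ≤ V x
  even : ∀ x : ℝ, V (-x) = V x
  pos : ∀ x : ℝ, x ≠ 0 → 0 < V x
  smooth : ContDiffOn ℝ 2 V {(0 : ℝ)}ᶜ
  sing : Filter.Tendsto V (nhdsWithin 0 {(0 : ℝ)}ᶜ) Filter.atTop
  cvx : ∀ x : ℝ, 0 < x → 0 < lam V x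
  decV : Filter.Tendsto V Filter.atTop (nhds 0)
  decV' : Filter.Tendsto (deriv V) Filter.atTop (nhds 0)
  one_lt_a : 1 < a
  decV'' : ∀ δ : ℝ, 0 < δ → ∃ c : ℝ, 0 < c ∧
    ∀ x : ℝ, δ ≤ |x| → deriv (deriv V) x ≤ c * |x| ^ (-(a + 2))

/-- The configuration space 𝒟_n. -/
def Dn (n : ℕ) : Set (Fin (n + 1) → ℝ) :=
  {x | x 0 = 0 ∧ x (Fin.last n) = 1 ∧ Monotone x}

/-- The energy E_n(x) := (1/n) Σ_{k=1}^{n} Σ_{j=0}^{n−k} V(n[x(j+k) − x(j)]),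
valued in [0,∞], with the convention V(0) = +∞ from (Sing).  The double sum is
written as a sum over all pairs q < p. -/
def En (V : ℝ → ℝ) (n : ℕ) (x : Fin (n + 1) → ℝ) : ℝ≥0∞ :=
  ENNReal.ofReal (1 / (n : ℝ)) *
    ∑ p : Fin (n + 1), ∑ q : Fin (n + 1),
      if (q : ℕ) < (p : ℕ) then
        (if x p = x q then ⊤ else ENNReal.ofReal (V ((n : ℝ) * (x p - x q))))
      else 0

/-- The first-order Taylor remainder φ_k(y) := V(k+y) − V(k) − V'(k)y. -/
def phi (V : ℝ → ℝ) (k y : ℝ) : ℝ :=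
  V (k + y) - V k - deriv V k * y

/-- The lower-bound function Φ_k. -/
def PhiLB (V : ℝ → ℝ) (k y : ℝ) : ℝ :=
  if y ≤ 1 then 1 / 2 * lam V (k + 1) * y ^ 2 else lam V (k + 1) * (y - 1 / 2)

/-- σ^n(i) := Σ_{k=i+1}^{n−i} min(k−i, n−i+1−k)|V'(k)| for 1 ≤ i ≤ ⌊n/2⌋,
and 0 otherwise. -/
def sigman (V : ℝ → ℝ) (n i : ℕ) : ℝ :=
  if 1 ≤ i ∧ i ≤ n / 2 then
    ∑ k ∈ Finset.Icc (i + 1) (n - i),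
      ((min (k - i) (n + 1 - i - k) : ℕ) : ℝ) * |deriv V (k : ℝ)|
  else 0

/-- σ^∞(i) := Σ_{k=i+1}^∞ (k−i)|V'(k)| for i ≥ 1 (index 0 is inert). -/
def sigmaInf (V : ℝ → ℝ) (i : ℕ) : ℝ :=
  if i = 0 then 0
  else ∑' m : ℕ, ((m + 1 : ℕ) : ℝ) * |deriv V ((i + 1 + m : ℕ) : ℝ)|

/-- Dom E_n^1 := {ε ∈ ℝ^n : −1 ≤ ε(i) ≤ n, Σ_{i=1}^n ε(i) = 0}, regarded as a
subset of ℓ²(ℕ) by extension by zero. -/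
def DomEn1 (n : ℕ) : Set (ℕ → ℝ) :=
  {ε | (∀ i, 1 ≤ i → i ≤ n → -1 ≤ ε i ∧ ε i ≤ (n : ℝ)) ∧
    (∀ i, i = 0 ∨ n < i → ε i = 0) ∧
    (∑ i ∈ Finset.Icc 1 n, ε i) = 0}

/-- The renormalised energy
E_n^1(ε) := Σ_{k=1}^{n} Σ_{j=0}^{n−k} [V(k + Σ_{l=j+1}^{j+k} ε(l)) − V(k)]. -/
def En1 (V : ℝ → ℝ) (n : ℕ) (ε : ℕ → ℝ) : ℝ :=
  ∑ k ∈ Finset.Icc 1 n, ∑ j ∈ Finset.range (n - k + 1),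
    (V ((k : ℝ) + ∑ l ∈ Finset.Icc (j + 1) (j + k), ε l) - V (k : ℝ))

/-- The quadratic-type part Q_n(ε) := Σ_{k=1}^{n} Σ_{j=0}^{n−k} φ_k(Σ_{l=j+1}^{k+j} ε(l)). -/
def Qn (V : ℝ → ℝ) (n : ℕ) (ε : ℕ → ℝ) : ℝ :=
  ∑ k ∈ Finset.Icc 1 n, ∑ j ∈ Finset.range (n - k + 1),
    phi V (k : ℝ) (∑ l ∈ Finset.Icc (j + 1) (j + k), ε l)

/-- The half truncation ε^{n,1/2}(i) := ε(i) for 1 ≤ i ≤ ⌈n/2⌉ and 0 otherwise. -/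
def half (n : ℕ) (ε : ℕ → ℝ) (i : ℕ) : ℝ :=
  if 1 ≤ i ∧ i ≤ (n + 1) / 2 then ε i else 0

/-- The reversal ε⃖(i) := ε(n+1−i) for 1 ≤ i ≤ n, extended by zero. -/
def rev (n : ℕ) (ε : ℕ → ℝ) (i : ℕ) : ℝ :=
  if 1 ≤ i ∧ i ≤ n then ε (n + 1 - i) else 0

/-- Dom E_∞^l := {ε ∈ ℓ²(ℕ) : ε(i) ≥ −1 for all i ≥ 1} (index 0 is inert). -/
def DomEinfl : Set (ℕ → ℝ) :=
  {ε | Summable (fun i => ε i ^ 2) ∧ ε 0 = 0 ∧ ∀ i, 1 ≤ i → -1 ≤ ε i}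

/-- Q_∞(ε) := Σ_{k=1}^∞ Σ_{j=0}^∞ φ_k(Σ_{l=j+1}^{k+j} ε(l)), valued in [0,∞]
(the summands are nonnegative). -/
def Qinf (V : ℝ → ℝ) (ε : ℕ → ℝ) : ℝ≥0∞ :=
  ∑' (k : ℕ) (j : ℕ),
    ENNReal.ofReal (phi V ((k : ℝ) + 1) (∑ l ∈ Finset.Icc (j + 1) (j + k + 1), ε l))

/-- The linear term (σ^∞, ε)_{ℓ²(ℕ)} as an extended real (difference of the
sums of the positive and negative parts). -/
def linPart (V : ℝ → ℝ) (ε : ℕ → ℝ) : EReal :=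
  ((∑' i : ℕ, ENNReal.ofReal (sigmaInf V i * ε i) : ℝ≥0∞) : EReal) -
    ((∑' i : ℕ, ENNReal.ofReal (-(sigmaInf V i * ε i)) : ℝ≥0∞) : EReal)

/-- The limit boundary-layer energy E_∞^l(ε) := Q_∞(ε) + (σ^∞, ε), valued in
the extended reals. -/
def Einfl (V : ℝ → ℝ) (ε : ℕ → ℝ) : EReal :=
  (Qinf V ε : EReal) + linPart V ε

end

section Aux

variable {V : ℝ → ℝ} {a : ℝ}

/-- The real-valued (unnormalised) energy sum. -/
noncomputable def fsum (V : ℝ → ℝ) (n : ℕ) (x : Fin (n + 1) → ℝ) : ℝ :=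
  ∑ p : Fin (n + 1), ∑ q : Fin (n + 1),
    if (q : ℕ) < (p : ℕ) then V ((n : ℝ) * (x p - x q)) else 0

lemma BasicAssumptions.hasDerivAtV (h : BasicAssumptions V a) {x : ℝ} (hx : x ≠ 0) :
    HasDerivAt V (deriv V x) x := by
  have : ContDiffAt ℝ 2 V x :=
    h.smooth.contDiffAt (isOpen_compl_singleton.mem_nhds hx)
  exact (this.differentiableAt (by norm_num)).hasDerivAt

lemma BasicAssumptions.contAtV (h : BasicAssumptions V a) {x : ℝ} (hx : x ≠ 0) :
    ContinuousAt V x :=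
  h.smooth.continuousOn.continuousAt (isOpen_compl_singleton.mem_nhds hx)

lemma BasicAssumptions.deriv2_pos (h : BasicAssumptions V a) {x : ℝ} (hx : 0 < x) :
    0 < deriv (deriv V) x := by
  have hlam := h.cvx (x + 1) (by linarith)
  have hmem : deriv (deriv V) x ∈ deriv (deriv V) '' Set.Ioo 0 (x + 1) :=
    ⟨x, ⟨hx, by linarith⟩, rfl⟩
  by_cases hb : BddBelow (deriv (deriv V) '' Set.Ioo 0 (x + 1))
  · exact lt_of_lt_of_le hlam (csInf_le hb hmem)
  · rw [lam, Real.sInf_of_not_bddBelow hb] at hlam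
    exact absurd hlam (lt_irrefl 0)

lemma BasicAssumptions.strictConvexOnV (h : BasicAssumptions V a) :
    StrictConvexOn ℝ (Set.Ioi (0 : ℝ)) V := by
  apply strictConvexOn_of_deriv2_pos (convex_Ioi 0)
  · exact fun x hx => (h.contAtV (ne_of_gt hx)).continuousWithinAt
  · intro x hx
    rw [interior_Ioi] at hx
    have : deriv^[2] V = deriv (deriv V) := rfl
    rw [this]
    exact h.deriv2_pos hx

lemma BasicAssumptions.deriv_neg' (h : BasicAssumptions V a) {x : ℝ} (hx : x ≠ 0) :
    deriv V (-x) = -deriv V x := by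
  have h1 : HasDerivAt (fun y : ℝ => V (-y)) (deriv V (-x) * -1) x :=
    (h.hasDerivAtV (neg_ne_zero.mpr hx)).comp x (hasDerivAt_neg x)
  have h2 : (fun y : ℝ => V (-y)) = V := funext h.even
  rw [h2] at h1
  have := (h.hasDerivAtV hx).unique h1
  linarith

lemma fsum_nonneg (h : BasicAssumptions V a) (n : ℕ) (x : Fin (n + 1) → ℝ) :
    0 ≤ fsum V n x :=
  Finset.sum_nonneg fun p _ => Finset.sum_nonneg fun q _ => by
    split
    · exact h.nonneg _
    · exact le_rfl

lemma En_eq_ofReal (h : BasicAssumptions V a) {n : ℕ} {x : Fin (n + 1) → ℝ}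
    (hx : StrictMono x) :
    En V n x = ENNReal.ofReal (1 / (n : ℝ) * fsum V n x) := by
  have key : ∀ p q : Fin (n + 1),
      (if (q : ℕ) < (p : ℕ) then
        (if x p = x q then (⊤ : ℝ≥0∞) else ENNReal.ofReal (V ((n : ℝ) * (x p - x q))))
      else 0)
      = ENNReal.ofReal (if (q : ℕ) < (p : ℕ) then V ((n : ℝ) * (x p - x q)) else 0) := by
    intro p q
    by_cases hpq : (q : ℕ) < (p : ℕ)
    · have hlt : x q < x p := hx (Fin.lt_def.mpr hpq)
      rw [if_pos hpq, if_pos hpq, if_neg hlt.ne']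
    · simp [hpq]
  rw [En]
  simp_rw [key]
  have h1 : ∀ p : Fin (n + 1),
      (∑ q : Fin (n + 1),
        ENNReal.ofReal (if (q : ℕ) < (p : ℕ) then V ((n : ℝ) * (x p - x q)) else 0))
      = ENNReal.ofReal (∑ q : Fin (n + 1),
          if (q : ℕ) < (p : ℕ) then V ((n : ℝ) * (x p - x q)) else 0) := by
    intro p
    rw [ENNReal.ofReal_sum_of_nonneg]
    intro q _
    split
    · exact h.nonneg _
    · exact le_rfl
  simp_rw [h1]
  rw [← ENNReal.ofReal_sum_of_nonneg (fun p _ => Finset.sum_nonneg fun q _ => by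
    split
    · exact h.nonneg _
    · exact le_rfl),
    ← ENNReal.ofReal_mul (by positivity)]
  rfl

lemma En_eq_top {n : ℕ} (hn : 0 < n) {x : Fin (n + 1) → ℝ}
    (hmono : Monotone x) (hx : ¬ StrictMono x) :
    En V n x = ⊤ := by
  obtain ⟨b, c, hbc, hxbc⟩ : ∃ b c : Fin (n + 1), b < c ∧ x b = x c := by
    by_contra hc
    push_neg at hc
    exact hx fun b c hbc => lt_of_le_of_ne (hmono hbc.le) (hc b c hbc)
  have hsum : (∑ p : Fin (n + 1), ∑ q : Fin (n + 1),
      if (q : ℕ) < (p : ℕ) then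
        (if x p = x q then (⊤ : ℝ≥0∞) else ENNReal.ofReal (V ((n : ℝ) * (x p - x q))))
      else 0) = ⊤ := by
    rw [ENNReal.sum_eq_top]
    refine ⟨c, Finset.mem_univ _, ?_⟩
    rw [ENNReal.sum_eq_top]
    refine ⟨b, Finset.mem_univ _, ?_⟩
    rw [if_pos (Fin.lt_def.mp hbc), if_pos hxbc.symm]
  rw [En, hsum, ENNReal.mul_top]
  simp only [ne_eq, ENNReal.ofReal_eq_zero, not_le]
  positivity

end Aux

/-- for n ≥ 2 the energy E_n has a unique minimiser on 𝒟_n; the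
minimiser is strictly increasing (i.e. lies in 𝒟_n ∖ ∂𝒟_n) and satisfies the
force balance Σ_{k≠i} V'(n[x̄(k) − x̄(i)]) = 0 for i = 1, …, n−1. -/
theorem statement1 (V : ℝ → ℝ) (a : ℝ) (h : BasicAssumptions V a)
    (n : ℕ) (hn : 2 ≤ n) :
    ∃ xbar ∈ Dn n, IsMinOn (En V n) (Dn n) xbar ∧
      (∀ y ∈ Dn n, IsMinOn (En V n) (Dn n) y → y = xbar) ∧
      StrictMono xbar ∧
      ∀ i : Fin (n + 1), 0 < (i : ℕ) → (i : ℕ) < n →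
        (∑ k : Fin (n + 1),
          if k ≠ i then deriv V ((n : ℝ) * (xbar k - xbar i)) else 0) = 0 := by
  classical
  have hn0 : 0 < n := by omega
  have hnR : (0 : ℝ) < n := by exact_mod_cast hn0
  -- the uniform configuration
  set u : Fin (n + 1) → ℝ := fun j => (j : ℝ) / n with hu_def
  have hu_sm : StrictMono u := by
    intro p q hpq
    have : (p : ℝ) < (q : ℝ) := by exact_mod_cast Fin.lt_def.mp hpq
    exact div_lt_div_of_pos_right this hnR
  have hu_Dn : u ∈ Dn n := by
    refine ⟨by simp [hu_def], ?_, hu_sm.monotone⟩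
    simp only [hu_def, Fin.val_last]
    field_simp
  set C := fsum V n u with hC
  -- the singularity gives a threshold η
  obtain ⟨η, hη, hηV⟩ : ∃ η > 0, ∀ t : ℝ, t ≠ 0 → |t| < η → C < V t := by
    have hev : {t : ℝ | C < V t} ∈ nhdsWithin 0 {(0 : ℝ)}ᶜ :=
      h.sing.eventually (eventually_gt_atTop C)
    rw [Metric.mem_nhdsWithin_iff] at hev
    obtain ⟨ε, hε, hsub⟩ := hev
    refine ⟨ε, hε, fun t ht htε => ?_⟩
    exact hsub ⟨by simpa [Real.dist_eq] using htε, ht⟩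
  set δ := min (1 / (n : ℝ)) (η / n) with hδ_def
  have hδ0 : 0 < δ := lt_min (by positivity) (by positivity)
  have hδn : δ ≤ 1 / n := min_le_left _ _
  have hδη : (n : ℝ) * δ ≤ η := by
    have := min_le_right (1 / (n : ℝ)) (η / n)
    calc (n : ℝ) * δ ≤ (n : ℝ) * (η / n) := by nlinarith
    _ = η := by field_simp
  -- the truncated domain
  set Dd : Set (Fin (n + 1) → ℝ) :=
    {x | x 0 = 0 ∧ x (Fin.last n) = 1 ∧
      ∀ j : Fin n, x j.castSucc + δ ≤ x j.succ} with hDd_def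
  have hDd_sm : ∀ x ∈ Dd, StrictMono x := by
    intro x hx
    apply Fin.strictMono_iff_lt_succ.mpr
    intro j
    have := hx.2.2 j
    linarith
  have hDd_Dn : Dd ⊆ Dn n := fun x hx => ⟨hx.1, hx.2.1, (hDd_sm x hx).monotone⟩
  have hu_Dd : u ∈ Dd := by
    refine ⟨hu_Dn.1, hu_Dn.2.1, fun j => ?_⟩
    simp only [hu_def, Fin.coe_castSucc, Fin.val_succ]
    push_cast
    have hgap : ((j : ℝ) + 1) / n - (j : ℝ) / n = 1 / n := by field_simp; ring
    linarith
  -- compactness of Dd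
  have hDd_closed : IsClosed Dd := by
    have : Dd = {x : Fin (n + 1) → ℝ | x 0 = 0} ∩
        ({x | x (Fin.last n) = 1} ∩
          ⋂ j : Fin n, {x | x j.castSucc + δ ≤ x j.succ}) := by
      ext x
      simp [hDd_def, Set.mem_iInter]
    rw [this]
    refine (isClosed_eq (continuous_apply 0) continuous_const).inter
      ((isClosed_eq (continuous_apply _) continuous_const).inter
        (isClosed_iInter fun j => isClosed_le
          ((continuous_apply _).add continuous_const) (continuous_apply _)))
  have hDd_sub : Dd ⊆ Set.Icc (0 : Fin (n + 1) → ℝ) 1 := by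
    intro x hx
    have hm := (hDd_sm x hx).monotone
    constructor
    · intro j
      have := hm (Fin.zero_le j)
      simpa [hx.1] using this
    · intro j
      have := hm (Fin.le_last j)
      simpa [hx.2.1] using this
  have hDd_cpt : IsCompact Dd := (isCompact_Icc).of_isClosed_subset hDd_closed hDd_sub
  -- continuity of fsum on Dd
  have hcont : ContinuousOn (fsum V n) Dd := by
    apply continuousOn_finset_sum
    intro p _
    apply continuousOn_finset_sum
    intro q _
    by_cases hpq : (q : ℕ) < (p : ℕ)
    · simp only [if_pos hpq]
      intro x hx
      have hlt : x q < x p := (hDd_sm x hx) (Fin.lt_def.mpr hpq)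
      have hne : (n : ℝ) * (x p - x q) ≠ 0 :=
        ne_of_gt (mul_pos hnR (by linarith))
      have hf : Continuous (fun x : Fin (n + 1) → ℝ => (n : ℝ) * (x p - x q)) :=
        continuous_const.mul ((continuous_apply p).sub (continuous_apply q))
      have hca : ContinuousAt (V ∘ fun x : Fin (n + 1) → ℝ => (n : ℝ) * (x p - x q)) x :=
        ContinuousAt.comp (x := x) (h.contAtV hne) hf.continuousAt
      exact hca.continuousWithinAt
    · simp only [if_neg hpq]
      exact continuousOn_const
  -- the minimiser on Dd
  obtain ⟨xbar, hxbar_Dd, hxbar_min⟩ :=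
    hDd_cpt.exists_isMinOn ⟨u, hu_Dd⟩ hcont
  have hsm : StrictMono xbar := hDd_sm xbar hxbar_Dd
  have hxbar_Dn : xbar ∈ Dn n := hDd_Dn hxbar_Dd
  -- single term below the sum
  have hterm_le : ∀ (x : Fin (n + 1) → ℝ) (p q : Fin (n + 1)), (q : ℕ) < (p : ℕ) →
      V ((n : ℝ) * (x p - x q)) ≤ fsum V n x := by
    intro x p q hpq
    have hnn : ∀ (r s : Fin (n + 1)),
        0 ≤ (if (s : ℕ) < (r : ℕ) then V ((n : ℝ) * (x r - x s)) else 0) := by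
      intro r s
      split
      · exact h.nonneg _
      · exact le_rfl
    have h1 : (if (q : ℕ) < (p : ℕ) then V ((n : ℝ) * (x p - x q)) else 0) ≤
        ∑ s : Fin (n + 1), if (s : ℕ) < (p : ℕ) then V ((n : ℝ) * (x p - x s)) else 0 :=
      Finset.single_le_sum (fun s _ => hnn p s) (Finset.mem_univ q)
    have h2 : (∑ s : Fin (n + 1), if (s : ℕ) < (p : ℕ) then V ((n : ℝ) * (x p - x s)) else 0) ≤
        fsum V n x :=
      Finset.single_le_sum (f := fun r : Fin (n + 1) => ∑ s : Fin (n + 1),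
        if (s : ℕ) < (r : ℕ) then V ((n : ℝ) * (x r - x s)) else 0)
        (fun r _ => Finset.sum_nonneg fun s _ => hnn r s) (Finset.mem_univ p)
    rw [if_pos hpq] at h1
    exact h1.trans h2
  -- xbar minimises fsum among strictly monotone configurations in Dn
  have hfmin : ∀ y ∈ Dn n, StrictMono y → fsum V n xbar ≤ fsum V n y := by
    intro y hy hys
    by_cases hgap : ∀ j : Fin n, y j.castSucc + δ ≤ y j.succ
    · exact isMinOn_iff.mp hxbar_min y ⟨hy.1, hy.2.1, hgap⟩
    · push_neg at hgap
      obtain ⟨j, hj⟩ := hgap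
      have hgap_pos : 0 < y j.succ - y j.castSucc := by
        have := hys (Fin.castSucc_lt_succ : j.castSucc < j.succ)
        linarith
      have harg_pos : 0 < (n : ℝ) * (y j.succ - y j.castSucc) :=
        mul_pos hnR hgap_pos
      have harg_lt : |(n : ℝ) * (y j.succ - y j.castSucc)| < η := by
        rw [abs_of_pos harg_pos]
        have : (n : ℝ) * (y j.succ - y j.castSucc) < (n : ℝ) * δ := by nlinarith
        linarith
      have hbig : C < V ((n : ℝ) * (y j.succ - y j.castSucc)) :=
        hηV _ (ne_of_gt harg_pos) harg_lt
      have hxC : fsum V n xbar ≤ C := isMinOn_iff.mp hxbar_min u hu_Dd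
      have hsucc : ((j.castSucc : ℕ) : ℕ) < ((j.succ : Fin (n + 1)) : ℕ) := by simp
      have := hterm_le y j.succ j.castSucc hsucc
      linarith
  -- xbar minimises En on Dn
  have hEn_min : IsMinOn (En V n) (Dn n) xbar := by
    rw [isMinOn_iff]
    intro y hy
    by_cases hys : StrictMono y
    · rw [En_eq_ofReal h hsm, En_eq_ofReal h hys]
      exact ENNReal.ofReal_le_ofReal
        (mul_le_mul_of_nonneg_left (hfmin y hy hys) (by positivity))
    · rw [En_eq_top hn0 hy.2.2 hys]
      exact le_top
  -- positivity of fsum xbar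
  have hfx_pos : 0 < fsum V n xbar := by
    have hc : ((0 : Fin (n + 1)) : ℕ) < ((Fin.last n : Fin (n + 1)) : ℕ) := by
      simpa using hn0
    have := hterm_le xbar (Fin.last n) 0 hc
    have harg : (n : ℝ) * (xbar (Fin.last n) - xbar 0) = n := by
      rw [hxbar_Dn.2.1, hxbar_Dn.1]; ring
    rw [harg] at this
    have := h.pos (n : ℝ) (ne_of_gt hnR)
    linarith
  -- uniqueness
  have huniq : ∀ y ∈ Dn n, IsMinOn (En V n) (Dn n) y → y = xbar := by
    intro y hy hymin
    have hys : StrictMono y := by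
      by_contra hys
      have h1 := isMinOn_iff.mp hymin xbar hxbar_Dn
      rw [En_eq_top hn0 hy.2.2 hys, En_eq_ofReal h hsm] at h1
      exact absurd (top_le_iff.mp h1) (ENNReal.ofReal_ne_top)
    have hfeq : fsum V n y = fsum V n xbar := by
      have e1 := isMinOn_iff.mp hymin xbar hxbar_Dn
      have e2 := isMinOn_iff.mp hEn_min y hy
      rw [En_eq_ofReal h hsm, En_eq_ofReal h hys] at e1 e2
      have e1' := (ENNReal.ofReal_le_ofReal_iff
        (mul_nonneg (by positivity) (fsum_nonneg h n xbar))).mp e1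
      have e2' := (ENNReal.ofReal_le_ofReal_iff
        (mul_nonneg (by positivity) (fsum_nonneg h n y))).mp e2
      have hn' : (0 : ℝ) < 1 / n := by positivity
      have := le_of_mul_le_mul_left e1' hn'
      have := le_of_mul_le_mul_left e2' hn'
      linarith
    by_contra hne
    obtain ⟨i, hi⟩ := Function.ne_iff.mp hne
    have hi0 : i ≠ 0 := by
      intro h0
      rw [h0, hy.1, hxbar_Dn.1] at hi
      exact hi rfl
    have hiv : 0 < (i : ℕ) := Nat.pos_of_ne_zero fun hv => hi0 (Fin.ext hv)
    -- midpoint configuration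
    set z : Fin (n + 1) → ℝ := fun j => (y j + xbar j) / 2 with hz_def
    have hz_sm : StrictMono z := by
      intro p q hpq
      have h1 := hys hpq
      have h2 := hsm hpq
      simp only [hz_def]
      linarith
    have hz_Dn : z ∈ Dn n := by
      refine ⟨?_, ?_, hz_sm.monotone⟩
      · simp only [hz_def, hy.1, hxbar_Dn.1]; norm_num
      · simp only [hz_def, hy.2.1, hxbar_Dn.2.1]; norm_num
    -- strict convexity gives fsum z < fsum xbar
    have hflat : ∀ w : Fin (n + 1) → ℝ, fsum V n w =
        ∑ pq ∈ (Finset.univ ×ˢ Finset.univ : Finset (Fin (n + 1) × Fin (n + 1))),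
          (if ((pq.2 : ℕ) < (pq.1 : ℕ)) then V ((n : ℝ) * (w pq.1 - w pq.2)) else 0) := by
      intro w
      rw [fsum, ← Finset.sum_product']
    have key : fsum V n z <
        ∑ pq ∈ (Finset.univ ×ˢ Finset.univ : Finset (Fin (n + 1) × Fin (n + 1))),
          (((if ((pq.2 : ℕ) < (pq.1 : ℕ)) then V ((n : ℝ) * (y pq.1 - y pq.2)) else 0) +
            (if ((pq.2 : ℕ) < (pq.1 : ℕ)) then V ((n : ℝ) * (xbar pq.1 - xbar pq.2)) else 0)) / 2) := by
      rw [hflat z]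
      apply Finset.sum_lt_sum
      · rintro ⟨p, q⟩ -
        by_cases hc : (q : ℕ) < (p : ℕ)
        · simp only [if_pos hc]
          have hyq : y q < y p := hys (Fin.lt_def.mpr hc)
          have hxq : xbar q < xbar p := hsm (Fin.lt_def.mpr hc)
          have hA : (n : ℝ) * (y p - y q) ∈ Set.Ioi (0 : ℝ) :=
            mul_pos hnR (by linarith)
          have hB : (n : ℝ) * (xbar p - xbar q) ∈ Set.Ioi (0 : ℝ) :=
            mul_pos hnR (by linarith)
          have hconv := h.strictConvexOnV.convexOn.2 hA hB
            (by norm_num : (0:ℝ) ≤ 1/2) (by norm_num : (0:ℝ) ≤ 1/2) (by norm_num)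
          simp only [smul_eq_mul] at hconv
          have harg : (n : ℝ) * (z p - z q) =
              1/2 * ((n : ℝ) * (y p - y q)) + 1/2 * ((n : ℝ) * (xbar p - xbar q)) := by
            simp only [hz_def]; ring
          rw [harg]
          linarith
        · simp [hc]
      · refine ⟨(i, 0), Finset.mem_univ _, ?_⟩
        have hc : ((0 : Fin (n + 1)) : ℕ) < (i : ℕ) := by simpa using hiv
        simp only [if_pos hc]
        have hA : (n : ℝ) * (y i - y 0) ∈ Set.Ioi (0 : ℝ) :=
          mul_pos hnR (by have := hys (Fin.lt_def.mpr hc); linarith)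
        have hB : (n : ℝ) * (xbar i - xbar 0) ∈ Set.Ioi (0 : ℝ) :=
          mul_pos hnR (by have := hsm (Fin.lt_def.mpr hc); linarith)
        have hAB : (n : ℝ) * (y i - y 0) ≠ (n : ℝ) * (xbar i - xbar 0) := by
          rw [hy.1, hxbar_Dn.1]
          intro heq
          exact hi (by
            have := mul_left_cancel₀ (ne_of_gt hnR) heq
            linarith)
        have hconv := h.strictConvexOnV.2 hA hB hAB
          (by norm_num : (0:ℝ) < 1/2) (by norm_num : (0:ℝ) < 1/2) (by norm_num)
        simp only [smul_eq_mul] at hconv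
        have harg : (n : ℝ) * (z i - z 0) =
            1/2 * ((n : ℝ) * (y i - y 0)) + 1/2 * ((n : ℝ) * (xbar i - xbar 0)) := by
          simp only [hz_def]; ring
        rw [harg]
        linarith
    have hz_lt : fsum V n z < fsum V n xbar := by
      have hsum_eq :
          (∑ pq ∈ (Finset.univ ×ˢ Finset.univ : Finset (Fin (n + 1) × Fin (n + 1))),
            (((if ((pq.2 : ℕ) < (pq.1 : ℕ)) then V ((n : ℝ) * (y pq.1 - y pq.2)) else 0) +
              (if ((pq.2 : ℕ) < (pq.1 : ℕ)) then V ((n : ℝ) * (xbar pq.1 - xbar pq.2)) else 0)) / 2))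
          = (fsum V n y + fsum V n xbar) / 2 := by
        rw [hflat y, hflat xbar, ← Finset.sum_add_distrib, ← Finset.sum_div]
      rw [hsum_eq, hfeq] at key
      linarith
    have hcontra := isMinOn_iff.mp hEn_min z hz_Dn
    rw [En_eq_ofReal h hsm, En_eq_ofReal h hz_sm] at hcontra
    have := (ENNReal.ofReal_le_ofReal_iff
      (mul_nonneg (by positivity) (fsum_nonneg h n z))).mp hcontra
    have hn' : (0 : ℝ) < 1 / n := by positivity
    have := le_of_mul_le_mul_left this hn'
    linarith
  -- force balance
  have hforce : ∀ i : Fin (n + 1), 0 < (i : ℕ) → (i : ℕ) < n →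
      (∑ k : Fin (n + 1),
        if k ≠ i then deriv V ((n : ℝ) * (xbar k - xbar i)) else 0) = 0 := by
    intro i hiv hin
    set e : Fin (n + 1) → ℝ := fun j => if j = i then 1 else 0 with he_def
    have he0 : e 0 = 0 := by
      simp only [he_def]
      rw [if_neg]
      intro h0
      rw [← h0] at hiv
      simp at hiv
    have he_last : e (Fin.last n) = 0 := by
      simp only [he_def]
      rw [if_neg]
      intro h0
      rw [← h0, Fin.val_last] at hin
      exact lt_irrefl _ hin
    have he_bound : ∀ j, |e j| ≤ 1 := by
      intro j
      simp only [he_def]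
      split <;> norm_num
    -- minimal gap
    have hne' : (Finset.univ : Finset (Fin n)).Nonempty := ⟨⟨0, hn0⟩, Finset.mem_univ _⟩
    set m := Finset.univ.inf' hne' (fun j : Fin n => xbar j.succ - xbar j.castSucc) with hm_def
    have hm0 : 0 < m := by
      rw [hm_def, Finset.lt_inf'_iff]
      intro j _
      have := hsm (Fin.castSucc_lt_succ : j.castSucc < j.succ)
      linarith
    have hm_le : ∀ j : Fin n, m ≤ xbar j.succ - xbar j.castSucc := fun j =>
      Finset.inf'_le _ (Finset.mem_univ j)
    -- perturbed configurations
    have hxt : ∀ t : ℝ, |t| < m →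
        (fun j => xbar j + e j * t) ∈ Dn n ∧ StrictMono (fun j => xbar j + e j * t) := by
      intro t ht
      have hsm' : StrictMono (fun j => xbar j + e j * t) := by
        apply Fin.strictMono_iff_lt_succ.mpr
        intro j
        have h1 := hm_le j
        have h3 : |e j.succ - e j.castSucc| ≤ 1 := by
          simp only [he_def]
          split_ifs <;> norm_num
        have h2 : |(e j.succ - e j.castSucc) * t| ≤ |t| := by
          rw [abs_mul]
          calc |e j.succ - e j.castSucc| * |t| ≤ 1 * |t| :=
                mul_le_mul_of_nonneg_right h3 (abs_nonneg t)
          _ = |t| := one_mul _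
        have h4 := neg_abs_le ((e j.succ - e j.castSucc) * t)
        have h5 : (e j.succ - e j.castSucc) * t = e j.succ * t - e j.castSucc * t := by ring
        rw [h5] at h4 h2
        show xbar j.castSucc + e j.castSucc * t < xbar j.succ + e j.succ * t
        linarith
      refine ⟨⟨?_, ?_, hsm'.monotone⟩, hsm'⟩
      · show xbar 0 + e 0 * t = 0
        rw [hxbar_Dn.1, he0]; ring
      · show xbar (Fin.last n) + e (Fin.last n) * t = 1
        rw [hxbar_Dn.2.1, he_last]; ring
    -- the derivative of the perturbed energy
    have hG : HasDerivAt (fun t => fsum V n (fun j => xbar j + e j * t))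
        (∑ p : Fin (n + 1), ∑ q : Fin (n + 1),
          if (q : ℕ) < (p : ℕ) then
            deriv V ((n : ℝ) * (xbar p - xbar q)) * ((n : ℝ) * (e p - e q))
          else 0) 0 := by
      simp only [fsum]
      apply HasDerivAt.fun_sum
      intro p _
      apply HasDerivAt.fun_sum
      intro q _
      by_cases hc : (q : ℕ) < (p : ℕ)
      · simp only [if_pos hc]
        have hinner : HasDerivAt
            (fun t : ℝ => (n : ℝ) * ((xbar p + e p * t) - (xbar q + e q * t)))
            ((n : ℝ) * (e p - e q)) 0 := by
          have h1 : HasDerivAt (fun t : ℝ => xbar p + e p * t) (e p) 0 := by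
            simpa using ((hasDerivAt_id (0 : ℝ)).const_mul (e p)).const_add (xbar p)
          have h2 : HasDerivAt (fun t : ℝ => xbar q + e q * t) (e q) 0 := by
            simpa using ((hasDerivAt_id (0 : ℝ)).const_mul (e q)).const_add (xbar q)
          simpa using (h1.sub h2).const_mul (n : ℝ)
        have hlt : xbar q < xbar p := hsm (Fin.lt_def.mpr hc)
        have hne0 : (n : ℝ) * (xbar p - xbar q) ≠ 0 :=
          ne_of_gt (mul_pos hnR (by linarith))
        have harg : (n : ℝ) * ((xbar p + e p * 0) - (xbar q + e q * 0)) =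
            (n : ℝ) * (xbar p - xbar q) := by ring
        have hV' : HasDerivAt V (deriv V ((n : ℝ) * (xbar p - xbar q)))
            ((fun t : ℝ => (n : ℝ) * ((xbar p + e p * t) - (xbar q + e q * t))) 0) := by
          simp only []
          rw [harg]
          exact h.hasDerivAtV hne0
        have := hV'.comp 0 hinner
        exact this
      · simp only [if_neg hc]
        exact hasDerivAt_const 0 0
    -- local minimality in t
    have hloc : IsLocalMin (fun t => fsum V n (fun j => xbar j + e j * t)) 0 := by
      have hmem : Set.Ioo (-m) m ∈ nhds (0 : ℝ) := Ioo_mem_nhds (by linarith) hm0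
      filter_upwards [hmem] with t ht
      have htm : |t| < m := abs_lt.mpr ⟨ht.1, ht.2⟩
      obtain ⟨hDnmem, hsm'⟩ := hxt t htm
      have h1 := isMinOn_iff.mp hEn_min _ hDnmem
      rw [En_eq_ofReal h hsm, En_eq_ofReal h hsm'] at h1
      have h2 := (ENNReal.ofReal_le_ofReal_iff
        (mul_nonneg (by positivity) (fsum_nonneg h n _))).mp h1
      have hn' : (0 : ℝ) < 1 / n := by positivity
      have h3 := le_of_mul_le_mul_left h2 hn'
      show fsum V n (fun j => xbar j + e j * 0) ≤ fsum V n (fun j => xbar j + e j * t)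
      have h0eq : (fun j : Fin (n + 1) => xbar j + e j * 0) = xbar :=
        funext fun j => by ring
      rw [h0eq]
      exact h3
    have hD0 : (∑ p : Fin (n + 1), ∑ q : Fin (n + 1),
        if (q : ℕ) < (p : ℕ) then
          deriv V ((n : ℝ) * (xbar p - xbar q)) * ((n : ℝ) * (e p - e q))
        else 0) = 0 := by
      rw [← hG.deriv]
      exact hloc.deriv_eq_zero
    -- rewrite the derivative as a difference of two single sums
    have hsplit : ∀ p q : Fin (n + 1),
        (if (q : ℕ) < (p : ℕ) then
          deriv V ((n : ℝ) * (xbar p - xbar q)) * ((n : ℝ) * (e p - e q))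
        else 0)
        = (if p = i then
            (if (q : ℕ) < (i : ℕ) then (n : ℝ) * deriv V ((n : ℝ) * (xbar i - xbar q)) else 0)
          else 0)
          - (if q = i then
            (if (i : ℕ) < (p : ℕ) then (n : ℝ) * deriv V ((n : ℝ) * (xbar p - xbar i)) else 0)
          else 0) := by
      intro p q
      by_cases hp : p = i <;> by_cases hq : q = i <;>
        by_cases hc : (q : ℕ) < (p : ℕ) <;>
          simp [he_def, hp, hq, hc] <;> split_ifs <;> ring
    have hS_eq : (∑ q : Fin (n + 1),
          if (q : ℕ) < (i : ℕ) then (n : ℝ) * deriv V ((n : ℝ) * (xbar i - xbar q)) else 0)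
        = (∑ p : Fin (n + 1),
          if (i : ℕ) < (p : ℕ) then (n : ℝ) * deriv V ((n : ℝ) * (xbar p - xbar i)) else 0) := by
      have e1 : (∑ p : Fin (n + 1), ∑ q : Fin (n + 1),
          if (q : ℕ) < (p : ℕ) then
            deriv V ((n : ℝ) * (xbar p - xbar q)) * ((n : ℝ) * (e p - e q))
          else 0)
          = (∑ q : Fin (n + 1),
              if (q : ℕ) < (i : ℕ) then (n : ℝ) * deriv V ((n : ℝ) * (xbar i - xbar q)) else 0)
            - (∑ p : Fin (n + 1),
              if (i : ℕ) < (p : ℕ) then (n : ℝ) * deriv V ((n : ℝ) * (xbar p - xbar i)) else 0) := by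
        rw [Finset.sum_congr rfl fun p _ => Finset.sum_congr rfl fun q _ => hsplit p q]
        rw [Finset.sum_congr rfl fun p (_ : p ∈ Finset.univ) => Finset.sum_sub_distrib _ _,
          Finset.sum_sub_distrib]
        congr 1
        · have : ∀ p : Fin (n + 1), (∑ q : Fin (n + 1),
              if p = i then
                (if (q : ℕ) < (i : ℕ) then (n : ℝ) * deriv V ((n : ℝ) * (xbar i - xbar q)) else 0)
              else 0)
              = if p = i then (∑ q : Fin (n + 1),
                  if (q : ℕ) < (i : ℕ) then (n : ℝ) * deriv V ((n : ℝ) * (xbar i - xbar q)) else 0)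
                else 0 := by
            intro p
            split
            · rfl
            · exact Finset.sum_const_zero
          rw [Finset.sum_congr rfl fun p _ => this p, Finset.sum_ite_eq' Finset.univ i]
          simp
        · have : ∀ p : Fin (n + 1), (∑ q : Fin (n + 1),
              if q = i then
                (if (i : ℕ) < (p : ℕ) then (n : ℝ) * deriv V ((n : ℝ) * (xbar p - xbar i)) else 0)
              else 0)
              = if (i : ℕ) < (p : ℕ) then (n : ℝ) * deriv V ((n : ℝ) * (xbar p - xbar i)) else 0 := by
            intro p
            rw [Finset.sum_ite_eq' Finset.univ i]
            simp
          rw [Finset.sum_congr rfl fun p _ => this p]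
      rw [e1] at hD0
      linarith
    -- conclude using oddness of V'
    have hodd : ∀ k : Fin (n + 1), (k : ℕ) < (i : ℕ) →
        deriv V ((n : ℝ) * (xbar k - xbar i)) = -deriv V ((n : ℝ) * (xbar i - xbar k)) := by
      intro k hk
      have hlt : xbar k < xbar i := hsm (Fin.lt_def.mpr hk)
      have hu0 : (n : ℝ) * (xbar i - xbar k) ≠ 0 := ne_of_gt (mul_pos hnR (by linarith))
      have harg : (n : ℝ) * (xbar k - xbar i) = -((n : ℝ) * (xbar i - xbar k)) := by ring
      rw [harg, h.deriv_neg' hu0]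
    have hterm : ∀ k : Fin (n + 1),
        ((n : ℝ) * if k ≠ i then deriv V ((n : ℝ) * (xbar k - xbar i)) else 0)
        = (if (i : ℕ) < (k : ℕ) then (n : ℝ) * deriv V ((n : ℝ) * (xbar k - xbar i)) else 0)
          - (if (k : ℕ) < (i : ℕ) then (n : ℝ) * deriv V ((n : ℝ) * (xbar i - xbar k)) else 0) := by
      intro k
      rcases lt_trichotomy ((k : ℕ)) ((i : ℕ)) with hk | hk | hk
      · have hki : k ≠ i := Fin.ne_of_val_ne (Nat.ne_of_lt hk)
        rw [if_pos hki, if_neg (by omega), if_pos hk, hodd k hk]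
        ring
      · have hki : k = i := Fin.ext hk
        rw [if_neg (by simp [hki]), if_neg (by omega), if_neg (by omega)]
        ring
      · have hki : k ≠ i := Fin.ne_of_val_ne (Nat.ne_of_gt hk)
        rw [if_pos hki, if_pos hk, if_neg (by omega)]
        ring
    have hfinal : (n : ℝ) * (∑ k : Fin (n + 1),
        if k ≠ i then deriv V ((n : ℝ) * (xbar k - xbar i)) else 0) = 0 := by
      rw [Finset.mul_sum, Finset.sum_congr rfl fun k _ => hterm k, Finset.sum_sub_distrib,
        hS_eq]
      ring
    have := mul_eq_zero.mp hfinal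
    rcases this with h0 | h0
    · exact absurd h0 (ne_of_gt hnR)
    · exact h0
  exact ⟨xbar, hxbar_Dn, hEn_min, huniq, hsm, hforce⟩
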